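/- arXiv:1805.01418 — 3 statements merged into one kernel-verified Lean document; each statement's English description precedes it below -/
import Mathlib

section
/- Let M be an n×n real symmetric negative definite matrix all of whose off-diagonal entries are nonnegative (M_{ij} ≥ 0 for all i ≠ j). Then M is invertible and every entry of the inverse matrix M⁻¹ is nonpositive. -/
/-- Let `M` be an `n × n` real symmetric negative definite matrix all of whose
off-diagonal entries are nonnegative.  Then `M` is invertible and every entry of
the inverse matrix `M⁻¹` is nonpositive. -/
theorem inv_entries_nonpos_of_negdef_offdiag_nonneg
    {n : ℕ} (M : Matrix (Fin n) (Fin n) ℝ)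
    (hsymm : M.IsSymm)
    (hneg : ∀ x : Fin n → ℝ, x ≠ 0 → dotProduct x (M.mulVec x) < 0)
    (hoff : ∀ i j : Fin n, i ≠ j → 0 ≤ M i j) :
    IsUnit M ∧ ∀ i j : Fin n, M⁻¹ i j ≤ 0 := by
  have hdet : M.det ≠ 0 := by
    intro h
    obtain ⟨v, hv, hMv⟩ := (Matrix.exists_mulVec_eq_zero_iff).mpr h
    have := hneg v hv
    rw [hMv, dotProduct_zero] at this
    exact lt_irrefl 0 this
  have hunit : IsUnit M := by
    rw [Matrix.isUnit_iff_isUnit_det]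
    exact isUnit_iff_ne_zero.mpr hdet
  refine ⟨hunit, fun i j => ?_⟩
  -- x is the j-th column of M⁻¹
  set x : Fin n → ℝ := fun k => M⁻¹ k j with hx
  have hMx : M.mulVec x = fun k => (1 : Matrix (Fin n) (Fin n) ℝ) k j := by
    funext k
    have h1 : M * M⁻¹ = 1 := Matrix.mul_nonsing_inv M (isUnit_iff_ne_zero.mpr hdet)
    calc M.mulVec x k = (M * M⁻¹) k j := by
          simp [Matrix.mulVec, Matrix.mul_apply, dotProduct, hx]
      _ = (1 : Matrix (Fin n) (Fin n) ℝ) k j := by rw [h1]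
  -- positive and negative parts
  set xp : Fin n → ℝ := fun k => max (x k) 0 with hxp
  set xm : Fin n → ℝ := fun k => max (-(x k)) 0 with hxm
  have hsum : xp = x + xm := by
    funext k
    simp only [hxp, hxm, Pi.add_apply]
    rcases le_total (x k) 0 with h | h
    · rw [max_eq_right h, max_eq_left (by linarith)]; ring
    · rw [max_eq_left h, max_eq_right (by linarith)]; ring
  -- key: xp = 0
  have hxpz : xp = 0 := by
    by_contra hne
    have hlt := hneg xp hne
    have hge : 0 ≤ dotProduct xp (M.mulVec xp) := by
      nth_rewrite 2 [hsum]
      rw [Matrix.mulVec_add, dotProduct_add]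
      have h1 : 0 ≤ dotProduct xp (M.mulVec x) := by
        rw [hMx]
        unfold dotProduct
        apply Finset.sum_nonneg
        intro k _
        by_cases hk : k = j
        · subst hk
          simp [Matrix.one_apply]
          exact le_max_right _ _
        · simp [Matrix.one_apply, hk]
      have h2 : 0 ≤ dotProduct xp (M.mulVec xm) := by
        unfold dotProduct Matrix.mulVec
        apply Finset.sum_nonneg
        intro k _
        simp only [hxp, hxm]
        rcases le_or_gt (x k) 0 with h | h
        · rw [max_eq_right h, zero_mul]
        · refine mul_nonneg (le_max_right _ _) ?_
          apply Finset.sum_nonneg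
          intro l _
          by_cases hl : l = k
          · subst hl
            show 0 ≤ M l l * (-(x l) ⊔ 0)
            rw [show (-(x l) ⊔ 0) = 0 from max_eq_right (by linarith), mul_zero]
          · exact mul_nonneg (hoff k l (Ne.symm hl)) (le_max_right _ _)
      linarith
    linarith
  have : x i ≤ 0 := by
    have : xp i = 0 := by rw [hxpz]; rfl
    simp only [hxp] at this
    by_contra h
    push_neg at h
    rw [max_eq_left h.le] at this
    linarith
  exact this
end

section
/- Let M be an n×n real symmetric negative definite matrix all of whose off-diagonal entries are nonnegative (M_{ij} ≥ 0 for all i ≠ j), and assume M is irreducible, i.e. for every pair of indices i ≠ j there exists a chain of indices i = k₀, k₁, …, k_m = j with M_{k_l k_{l+1}} ≠ 0 for every 0 ≤ l < m. Then every entry of the inverse matrix M⁻¹ is strictly negative. -/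
/-- Let `M` be an `n × n` real symmetric negative definite matrix all of whose
off-diagonal entries are nonnegative, and assume `M` is irreducible, i.e. for every
pair of indices `i ≠ j` there is a chain of indices `i = k₀, k₁, …, k_m = j` with
`M (k l) (k (l+1)) ≠ 0` for every `l`.  Then every entry of `M⁻¹` is strictly
negative. -/
theorem inv_entries_neg_of_negdef_offdiag_nonneg_irreducible
    {n : ℕ} (M : Matrix (Fin n) (Fin n) ℝ)
    (hsymm : M.IsSymm)
    (hneg : ∀ x : Fin n → ℝ, x ≠ 0 → dotProduct x (M.mulVec x) < 0)
    (hoff : ∀ i j : Fin n, i ≠ j → 0 ≤ M i j)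
    (hirr : ∀ i j : Fin n, i ≠ j →
      ∃ (m : ℕ) (k : Fin (m + 1) → Fin n), k 0 = i ∧ k (Fin.last m) = j ∧
        ∀ l : Fin m, M (k l.castSucc) (k l.succ) ≠ 0) :
    ∀ i j : Fin n, M⁻¹ i j < 0 := by
  -- M is invertible
  have hdet : M.det ≠ 0 := by
    intro h
    obtain ⟨v, hv, hMv⟩ := (Matrix.exists_mulVec_eq_zero_iff).2 h
    have := hneg v hv
    rw [hMv, dotProduct_zero] at this
    exact lt_irrefl 0 this
  have hMinv : M * M⁻¹ = 1 := Matrix.mul_nonsing_inv M (isUnit_iff_ne_zero.2 hdet)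
  intro i0 j
  set x : Fin n → ℝ := fun i => M⁻¹ i j with hxdef
  have hMx : ∀ i, M.mulVec x i = if i = j then 1 else 0 := by
    intro i
    have h1 : M.mulVec x i = (M * M⁻¹) i j := by
      simp [Matrix.mulVec, Matrix.mul_apply, dotProduct, hxdef]
    rw [h1, hMinv, Matrix.one_apply]
  -- Step 1 : all x i ≤ 0
  have hxle : ∀ i, x i ≤ 0 := by
    by_contra hcon
    push_neg at hcon
    set y : Fin n → ℝ := fun i => max (x i) 0 with hy
    set z : Fin n → ℝ := fun i => max (-x i) 0 with hz
    have hy0 : ∀ i, 0 ≤ y i := fun i => le_max_right _ _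
    have hz0 : ∀ i, 0 ≤ z i := fun i => le_max_right _ _
    have hyz : ∀ i, y i * z i = 0 := by
      intro i
      rcases le_or_gt (x i) 0 with h | h
      · have : y i = 0 := max_eq_right h
        rw [this, zero_mul]
      · have : z i = 0 := max_eq_right (by linarith)
        rw [this, mul_zero]
    have hxyz : x = fun i => y i - z i := by
      funext i
      rcases le_or_gt (x i) 0 with h | h
      · simp [hy, hz, max_eq_right h, max_eq_left (by linarith : (0:ℝ) ≤ -x i)]
      · simp [hy, hz, max_eq_left h.le, max_eq_right (by linarith : -x i ≤ 0)]
    have hyne : y ≠ 0 := by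
      obtain ⟨i, hi⟩ := hcon
      intro h
      have h2 := congrFun h i
      have : y i = max (x i) 0 := rfl
      rw [this, Pi.zero_apply] at h2
      have := le_max_left (x i) 0
      linarith [h2 ▸ this]
    -- y ⬝ (M x) = y j
    have h1 : dotProduct y (M.mulVec x) = y j := by
      unfold dotProduct
      rw [Finset.sum_eq_single j]
      · rw [hMx j]; simp
      · intro b _ hb; rw [hMx b, if_neg hb, mul_zero]
      · intro h; exact absurd (Finset.mem_univ j) h
    -- y ⬝ (M z) ≥ 0
    have h2 : 0 ≤ dotProduct y (M.mulVec z) := by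
      unfold dotProduct Matrix.mulVec dotProduct
      apply Finset.sum_nonneg
      intro i _
      rw [Finset.mul_sum]
      apply Finset.sum_nonneg
      intro k _
      rcases eq_or_ne i k with h | h
      · subst h
        have : y i * (M i i * z i) = M i i * (y i * z i) := by ring
        rw [this, hyz i, mul_zero]
      · exact mul_nonneg (hy0 i) (mul_nonneg (hoff i k h) (hz0 k))
    -- x = y - z, so y ⬝ M y = y ⬝ M x + y ⬝ M z ≥ 0
    have h3 : dotProduct y (M.mulVec y)
        = dotProduct y (M.mulVec x) + dotProduct y (M.mulVec z) := by
      have : y = fun i => x i + z i := by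
        funext i
        have h5 := congrFun hxyz i
        show y i = x i + z i
        rw [h5]
        ring
      calc dotProduct y (M.mulVec y)
          = dotProduct y (M.mulVec (fun i => x i + z i)) := by rw [← this]
        _ = dotProduct y (M.mulVec x + M.mulVec z) := by
            congr 1
            exact Matrix.mulVec_add M x z
        _ = _ := dotProduct_add y _ _
    have h4 : 0 ≤ dotProduct y (M.mulVec y) := by
      rw [h3, h1]
      have := hy0 j
      linarith
    exact absurd (hneg y hyne) (not_lt.2 h4)
  -- If x i = 0 then (M x) i ≤ 0 with each off-diagonal term nonpositive
  have hterm : ∀ i k, x i = 0 → M i k * x k ≤ 0 := by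
    intro i k hi
    rcases eq_or_ne i k with h | h
    · subst h; rw [hi, mul_zero]
    · exact mul_nonpos_of_nonneg_of_nonpos (hoff i k h) (hxle k)
  -- x j < 0
  have hxj : x j < 0 := by
    rcases lt_or_eq_of_le (hxle j) with h | h
    · exact h
    · exfalso
      have h1 : M.mulVec x j = 1 := by rw [hMx j, if_pos rfl]
      have h2 : M.mulVec x j ≤ 0 := by
        unfold Matrix.mulVec dotProduct
        exact Finset.sum_nonpos fun k _ => hterm j k h
      linarith
  -- propagation of zeros
  have prop : ∀ i, x i = 0 → i ≠ j → ∀ k, M i k ≠ 0 → x k = 0 := by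
    intro i hi hij k hMik
    have h1 : M.mulVec x i = 0 := by rw [hMx i, if_neg hij]
    have h2 : ∀ k ∈ Finset.univ, M i k * x k = 0 := by
      rw [← Finset.sum_eq_zero_iff_of_nonpos (fun k _ => hterm i k hi)]
      exact h1
    have := h2 k (Finset.mem_univ k)
    rcases mul_eq_zero.1 this with h | h
    · exact absurd h hMik
    · exact h
  -- conclude
  rcases lt_or_eq_of_le (hxle i0) with h | h
  · exact h
  · exfalso
    have hi0 : x i0 = 0 := h
    rcases eq_or_ne i0 j with hij | hij
    · rw [hij] at hi0; linarith
    · obtain ⟨m, k, hk0, hklast, hkchain⟩ := hirr i0 j hij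
      have hall : ∀ l : Fin (m + 1), x (k l) = 0 := by
        intro l
        induction l using Fin.induction with
        | zero => rw [hk0]; exact hi0
        | succ l ih =>
          have hne : k l.castSucc ≠ j := by
            intro hkj
            rw [hkj] at ih
            linarith
          exact prop (k l.castSucc) ih hne (k l.succ) (hkchain l)
      have := hall (Fin.last m)
      rw [hklast] at this
      linarith
end

section
/- Let M be an n×n real symmetric negative definite matrix all of whose off-diagonal entries are nonnegative (M_{ij} ≥ 0 for all i ≠ j), and assume M is irreducible, i.e. for every pair of indices i ≠ j there exists a chain of indices i = k₀, k₁, …, k_m = j with M_{k_l k_{l+1}} ≠ 0 for every 0 ≤ l < m. If u ∈ ℝⁿ has all coordinates nonnegative and u ≠ 0, then every coordinate of M⁻¹ u is strictly negative. -/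
/-- Let `M` be an `n × n` real symmetric negative definite matrix all of whose
off-diagonal entries are nonnegative, and assume `M` is irreducible (for every pair
of indices `i ≠ j` there is a chain `i = k₀, k₁, …, k_m = j` with
`M (k l) (k (l+1)) ≠ 0` for all `l`).  If `u ∈ ℝⁿ` has all coordinates nonnegative
and `u ≠ 0`, then every coordinate of `M⁻¹ u` is strictly negative. -/
theorem invMulVec_neg_of_negdef_offdiag_nonneg_irreducible
    {n : ℕ} (M : Matrix (Fin n) (Fin n) ℝ)
    (hsymm : M.IsSymm)
    (hneg : ∀ x : Fin n → ℝ, x ≠ 0 → dotProduct x (M.mulVec x) < 0)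
    (hoff : ∀ i j : Fin n, i ≠ j → 0 ≤ M i j)
    (hirr : ∀ i j : Fin n, i ≠ j →
      ∃ (m : ℕ) (k : Fin (m + 1) → Fin n), k 0 = i ∧ k (Fin.last m) = j ∧
        ∀ l : Fin m, M (k l.castSucc) (k l.succ) ≠ 0)
    (u : Fin n → ℝ) (hu : ∀ i, 0 ≤ u i) (hu0 : u ≠ 0) :
    ∀ i, M⁻¹.mulVec u i < 0 := by
  -- M is invertible
  have hdet : IsUnit M.det := by
    rw [isUnit_iff_ne_zero]
    intro h0
    obtain ⟨x, hx0, hx⟩ := (Matrix.exists_mulVec_eq_zero_iff).mpr h0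
    have := hneg x hx0
    rw [hx] at this
    simp [dotProduct_zero] at this
  set v := M⁻¹.mulVec u with hvdef
  have hMv : M.mulVec v = u := by
    rw [hvdef, Matrix.mulVec_mulVec, Matrix.mul_nonsing_inv _ hdet, Matrix.one_mulVec]
  -- Step 1: v ≤ 0
  have hvle : ∀ i, v i ≤ 0 := by
    by_contra hc
    push_neg at hc
    obtain ⟨i0, hi0⟩ := hc
    set x : Fin n → ℝ := fun i => max (v i) 0 with hxdef
    set w : Fin n → ℝ := fun i => max (-(v i)) 0 with hwdef
    have hxw : x = v + w := by
      funext i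
      simp only [hxdef, hwdef, Pi.add_apply]
      rcases le_total (v i) 0 with h | h
      · rw [max_eq_right h, max_eq_left (by linarith)]; ring
      · rw [max_eq_left h, max_eq_right (by linarith)]; ring
    have hxne : x ≠ 0 := by
      intro h
      have h0 := congrFun h i0
      simp only [hxdef, Pi.zero_apply] at h0
      have : v i0 ≤ 0 := le_of_max_le_left (le_of_eq h0)
      linarith
    have hlt := hneg x hxne
    have hge : 0 ≤ dotProduct x (M.mulVec x) := by
      have h1 : M.mulVec x = M.mulVec v + M.mulVec w := by
        rw [hxw, Matrix.mulVec_add]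
      rw [h1, dotProduct_add, hMv]
      have hA : 0 ≤ dotProduct x u := by
        refine Finset.sum_nonneg fun j _ => ?_
        exact mul_nonneg (le_max_right _ _) (hu j)
      have hB : 0 ≤ dotProduct x (M.mulVec w) := by
        refine Finset.sum_nonneg fun i _ => ?_
        have hx0 : (0:ℝ) ≤ x i := le_max_right _ _
        rcases eq_or_lt_of_le hx0 with h | h
        · rw [← h, zero_mul]
        · have hvi : 0 < v i := by
            by_contra hvi
            push_neg at hvi
            have : x i = 0 := by
              simp only [hxdef]
              exact max_eq_right hvi
            rw [this] at h; exact lt_irrefl _ h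
          have hwi : w i = 0 := by
            simp only [hwdef]
            exact max_eq_right (by linarith)
          refine mul_nonneg h.le ?_
          show 0 ≤ dotProduct (M i) w
          refine Finset.sum_nonneg fun j _ => ?_
          rcases eq_or_ne j i with rfl | hji
          · rw [hwi, mul_zero]
          · exact mul_nonneg (hoff i j hji.symm) (le_max_right _ _)
      linarith
    linarith
  -- Step 2: zero set is closed under nonzero entries
  have hclosed : ∀ i, v i = 0 → ∀ j, M i j ≠ 0 → v j = 0 := by
    intro i hvi j hMij
    have hMvi : (∑ l, M i l * v l) = u i := congrFun hMv i
    have hterms : ∀ l ∈ Finset.univ, M i l * v l ≤ 0 := by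
      intro l _
      rcases eq_or_ne l i with rfl | hli
      · rw [hvi, mul_zero]
      · exact mul_nonpos_of_nonneg_of_nonpos (hoff i l hli.symm) (hvle l)
    have hsum : (∑ l, M i l * v l) ≤ 0 := Finset.sum_nonpos hterms
    have hsum0 : (∑ l, M i l * v l) = 0 := le_antisymm hsum (hMvi ▸ hu i)
    have hzero := (Finset.sum_eq_zero_iff_of_nonpos hterms).mp hsum0 j (Finset.mem_univ j)
    rcases mul_eq_zero.mp hzero with h | h
    · exact absurd h hMij
    · exact h
  -- Step 3: strict negativity
  intro i
  rcases lt_or_eq_of_le (hvle i) with h | h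
  · exact h
  exfalso
  have hall : ∀ j, v j = 0 := by
    intro j
    rcases eq_or_ne j i with rfl | hji
    · exact h
    · obtain ⟨m, k, hk0, hkl, hkstep⟩ := hirr i j hji.symm
      have hchain : ∀ l : Fin (m + 1), v (k l) = 0 := by
        intro l
        induction l using Fin.induction with
        | zero => rw [hk0]; exact h
        | succ l ih => exact hclosed _ ih _ (hkstep l)
      have := hchain (Fin.last m)
      rwa [hkl] at this
  apply hu0
  rw [← hMv]
  funext j
  simp [Matrix.mulVec, dotProduct, hall]
end
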